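/- For every integer n ≥ 9, λ1(A(K_n,U_2^−)) > n/2 − 1. -/

import Mathlib

open Matrix

/-- The signed-complete-graph matrix `A(K_n, H^-)`: zero diagonal, `-1` on edges of `H`
(vertices labelled `1, …, n`, index `i : Fin n` corresponds to label `i+1`), `+1` otherwise. -/
noncomputable def signMat (n : ℕ) (E : ℕ → ℕ → Prop) : Matrix (Fin n) (Fin n) ℝ :=
  open scoped Classical in
  Matrix.of fun i j => if i = j then 0 else if E ((i : ℕ) + 1) ((j : ℕ) + 1) then -1 else 1

/-- The largest eigenvalue of a real matrix (the supremum of its spectrum). -/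
noncomputable def lam1 {n : ℕ} (M : Matrix (Fin n) (Fin n) ℝ) : ℝ :=
  sSup (spectrum ℝ M)

/-- `{i, j} = {a, b}` as an (unordered) edge. -/
def adjPair (a b i j : ℕ) : Prop := (i = a ∧ j = b) ∨ (i = b ∧ j = a)

/-- `U₁`: triangle `1 2 3` together with the pendant edges `{1, i}` for `4 ≤ i ≤ n`;
i.e. vertex `1` is adjacent to every other vertex, plus the edge `{2,3}`. -/
def U1edge (i j : ℕ) : Prop :=
  (i = 1 ∧ 2 ≤ j) ∨ (j = 1 ∧ 2 ≤ i) ∨ adjPair 2 3 i j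

/-- `D_{1,n-3}`: edges `{1,2}`, `{2,3}` and `{3,i}` for `4 ≤ i ≤ n`. -/
def Dedge (i j : ℕ) : Prop :=
  adjPair 1 2 i j ∨ adjPair 2 3 i j ∨ (i = 3 ∧ 4 ≤ j) ∨ (j = 3 ∧ 4 ≤ i)

/-- `U₂`: triangles `1 2 3` and `1 4 5` sharing vertex `1`, plus pendant edges `{1,i}`
for `6 ≤ i ≤ n`; i.e. vertex `1` adjacent to all, plus edges `{2,3}` and `{4,5}`. -/
def U2edge (i j : ℕ) : Prop :=
  (i = 1 ∧ 2 ≤ j) ∨ (j = 1 ∧ 2 ≤ i) ∨ adjPair 2 3 i j ∨ adjPair 4 5 i j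

/-- `H₁(s,t)` on `n = s + t + 4` vertices: triangle `1 2 3`, `s` pendant vertices
`5, …, s+4` at vertex `1`, vertex `4` adjacent to `1`, and `t` pendant vertices
`s+5, …, s+t+4` at vertex `4`. -/
def H1edge (s t : ℕ) (i j : ℕ) : Prop :=
  adjPair 1 2 i j ∨ adjPair 1 3 i j ∨ adjPair 2 3 i j ∨ adjPair 1 4 i j ∨
  (i = 1 ∧ 5 ≤ j ∧ j ≤ s + 4) ∨ (j = 1 ∧ 5 ≤ i ∧ i ≤ s + 4) ∨
  (i = 4 ∧ s + 5 ≤ j ∧ j ≤ s + t + 4) ∨ (j = 4 ∧ s + 5 ≤ i ∧ i ≤ s + t + 4)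

/-- `H₂(s,t)` on `n = s + t + 5` vertices: triangle `1 2 3`, edges `{1,4}` and `{4,5}`,
`s` pendant vertices `6, …, s+5` at vertex `4`, and `t` pendant vertices
`s+6, …, s+t+5` at vertex `5`. -/
def H2edge (s t : ℕ) (i j : ℕ) : Prop :=
  adjPair 1 2 i j ∨ adjPair 1 3 i j ∨ adjPair 2 3 i j ∨ adjPair 1 4 i j ∨ adjPair 4 5 i j ∨
  (i = 4 ∧ 6 ≤ j ∧ j ≤ s + 5) ∨ (j = 4 ∧ 6 ≤ i ∧ i ≤ s + 5) ∨
  (i = 5 ∧ s + 6 ≤ j ∧ j ≤ s + t + 5) ∨ (j = 5 ∧ s + 6 ≤ i ∧ i ≤ s + t + 5)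

/-- `K_{1,s} ∪ t·P₂` on `n = s + 1 + 2t` vertices: star with center `1` and leaves
`2, …, s+1`, together with the `t` disjoint edges `{s+2k+2, s+2k+3}`, `0 ≤ k < t`. -/
def starMatchEdge (s t : ℕ) (i j : ℕ) : Prop :=
  (i = 1 ∧ 2 ≤ j ∧ j ≤ s + 1) ∨ (j = 1 ∧ 2 ≤ i ∧ i ≤ s + 1) ∨
  (∃ k, k < t ∧ adjPair (s + 2 * k + 2) (s + 2 * k + 3) i j)

/-- The quotient matrix `Q₃(s,t)`. -/
noncomputable def Q3 (s t : ℕ) : Matrix (Fin 6) (Fin 6) ℝ :=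
  !![0, -1, -1, -1, -(s : ℝ), (t : ℝ);
     -1, 0, -1, 1, (s : ℝ), (t : ℝ);
     -1, -1, 0, 1, (s : ℝ), (t : ℝ);
     -1, 1, 1, 0, (s : ℝ), -(t : ℝ);
     -1, 1, 1, 1, (s : ℝ) - 1, (t : ℝ);
     1, 1, 1, -1, (s : ℝ), (t : ℝ) - 1]

/-- The quotient matrix `Q₄(s,t)`. -/
noncomputable def Q4 (s t : ℕ) : Matrix (Fin 7) (Fin 7) ℝ :=
  !![0, -1, -1, -1, 1, (s : ℝ), (t : ℝ);
     -1, 0, -1, 1, 1, (s : ℝ), (t : ℝ);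
     -1, -1, 0, 1, 1, (s : ℝ), (t : ℝ);
     -1, 1, 1, 0, -1, -(s : ℝ), (t : ℝ);
     1, 1, 1, -1, 0, (s : ℝ), -(t : ℝ);
     1, 1, 1, -1, 1, (s : ℝ) - 1, (t : ℝ);
     1, 1, 1, 1, -1, (s : ℝ), (t : ℝ) - 1]


section Aux
open Matrix

private lemma rayleigh_le' {n : ℕ} (M : Matrix (Fin n) (Fin n) ℝ) (hM : M.IsHermitian)
    (x : Fin n → ℝ) :
    x ⬝ᵥ M *ᵥ x ≤ sSup (spectrum ℝ M) * (x ⬝ᵥ x) := by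
  set d := hM.eigenvalues with hd
  set U : Matrix (Fin n) (Fin n) ℝ := (hM.eigenvectorUnitary : Matrix (Fin n) (Fin n) ℝ)
    with hUdef
  have hU1 : U * star U = 1 := (Matrix.mem_unitaryGroup_iff).mp hM.eigenvectorUnitary.2
  set y := star U *ᵥ x with hy
  have hxy : x ᵥ* U = y := by
    ext j
    simp [hy, Matrix.vecMul, Matrix.mulVec, dotProduct, Matrix.star_apply, mul_comm]
  have h1 : x ⬝ᵥ M *ᵥ x = ∑ i, d i * (y i * y i) := by
    conv_lhs => rw [hM.spectral_theorem, Unitary.conjStarAlgAut_apply]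
    rw [← Matrix.mulVec_mulVec, ← Matrix.mulVec_mulVec, Matrix.dotProduct_mulVec, hxy]
    simp [dotProduct, Matrix.mulVec_diagonal]
    ring_nf
    exact Finset.sum_congr rfl fun i _ => by ring
  have h2 : x ⬝ᵥ x = ∑ i, y i * y i := by
    have : y ⬝ᵥ y = x ⬝ᵥ (U *ᵥ (star U *ᵥ x)) := by
      conv_rhs => rw [Matrix.dotProduct_mulVec, hxy]
    rw [Matrix.mulVec_mulVec, hU1, Matrix.one_mulVec] at this
    rw [← this]; rfl
  have hspec : spectrum ℝ M = Set.range d := hM.spectrum_real_eq_range_eigenvalues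
  have hbdd : BddAbove (spectrum ℝ M) := by
    rw [hspec]; exact (Set.finite_range d).bddAbove
  have hle : ∀ i, d i ≤ sSup (spectrum ℝ M) :=
    fun i => le_csSup hbdd (hM.eigenvalues_mem_spectrum_real i)
  rw [h1, h2, Finset.mul_sum]
  exact Finset.sum_le_sum fun i _ =>
    mul_le_mul_of_nonneg_right (hle i) (mul_self_nonneg _)

private lemma u2_symm' (i j : ℕ) : U2edge i j ↔ U2edge j i := by
  unfold U2edge adjPair; tauto

private lemma signMat_herm' (n : ℕ) : (signMat n U2edge).IsHermitian := by
  ext i j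
  simp only [signMat, Matrix.conjTranspose_apply, Matrix.of_apply, star_trivial]
  by_cases h : i = j
  · simp [h]
  · have h' : ¬ j = i := fun e => h e.symm
    simp only [h, h', if_false]
    by_cases he : U2edge ((j:ℕ)+1) ((i:ℕ)+1)
    · rw [if_pos he, if_pos ((u2_symm' _ _).mpr he)]
    · rw [if_neg he, if_neg (fun e => he ((u2_symm' _ _).mp e))]

private lemma not_u2' {a b : ℕ} (ha : a ≠ 1 ∧ a ≠ 3 ∧ a ≠ 5) (hb : b ≠ 1 ∧ b ≠ 3 ∧ b ≠ 5) :
    ¬ U2edge a b := by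
  unfold U2edge adjPair; push_neg
  obtain ⟨ha1, ha3, ha5⟩ := ha; obtain ⟨hb1, hb3, hb5⟩ := hb
  refine ⟨fun h => absurd h ha1, fun h => absurd h hb1, ⟨?_, ?_⟩, ⟨?_, ?_⟩⟩ <;>
    rintro ⟨h1, h2⟩ <;> omega

end Aux

/-- for `n ≥ 9`, `λ₁(A(K_n,U₂⁻)) > n/2 − 1`. -/
theorem stmt3 (n : ℕ) (hn : 9 ≤ n) :
    lam1 (signMat n U2edge) > (n : ℝ) / 2 - 1 := by
  classical
  set M := signMat n U2edge with hM
  have h0 : (0 : ℕ) < n := by omega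
  have h2 : (2 : ℕ) < n := by omega
  have h4 : (4 : ℕ) < n := by omega
  set T : Finset (Fin n) := {⟨0, h0⟩, ⟨2, h2⟩, ⟨4, h4⟩} with hT
  set S : Finset (Fin n) := Tᶜ with hS
  have hmemS : ∀ i : Fin n, i ∈ S ↔ ((i : ℕ) ≠ 0 ∧ (i : ℕ) ≠ 2 ∧ (i : ℕ) ≠ 4) := by
    intro i
    simp [hS, hT, Finset.mem_compl, Fin.ext_iff]
  have hTcard : T.card = 3 := by
    rw [hT]
    rw [Finset.card_insert_of_notMem (by simp [Fin.ext_iff]),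
      Finset.card_insert_of_notMem (by simp [Fin.ext_iff]), Finset.card_singleton]
  have hScard : S.card = n - 3 := by
    rw [hS, Finset.card_compl, hTcard]
    simp
  set x : Fin n → ℝ := fun i => if i ∈ S then 1 else 0 with hx
  have hsum : ∀ f : Fin n → ℝ, ∑ i, x i * f i = ∑ i ∈ S, f i := by
    intro f
    rw [show (∑ i, x i * f i) = ∑ i, if i ∈ S then f i else 0 from
      Finset.sum_congr rfl fun i _ => by by_cases h : i ∈ S <;> simp [hx, h]]
    rw [Finset.sum_ite_mem, Finset.univ_inter]
  have hentry : ∀ i j : Fin n, i ∈ S → j ∈ S → M i j = if j = i then 0 else 1 := by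
    intro i j hi hj
    by_cases hij : j = i
    · simp [hij, hM, signMat]
    · have hi' := (hmemS i).mp hi
      have hj' := (hmemS j).mp hj
      have hne : ¬ U2edge ((i : ℕ) + 1) ((j : ℕ) + 1) := by
        apply not_u2' <;> omega
      have hij' : i ≠ j := fun e => hij e.symm
      simp [hM, signMat, hij, hij', hne]
  have hxx : x ⬝ᵥ x = (S.card : ℝ) := by
    rw [dotProduct, hsum (fun i => x i)]
    rw [Finset.sum_congr rfl (fun i hi => show x i = 1 by simp [hx, hi])]
    simp
  have hxMx : x ⬝ᵥ M *ᵥ x = (S.card : ℝ) * ((S.card : ℝ) - 1) := by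
    rw [dotProduct]
    rw [show (∑ i, x i * (M *ᵥ x) i) = ∑ i ∈ S, (M *ᵥ x) i from hsum _]
    have hinner : ∀ i ∈ S, (M *ᵥ x) i = (S.card : ℝ) - 1 := by
      intro i hi
      have : (M *ᵥ x) i = ∑ j, x j * M i j := by
        simp [Matrix.mulVec, dotProduct, mul_comm]
      rw [this, hsum (fun j => M i j)]
      rw [Finset.sum_congr rfl fun j hj => hentry i j hi hj]
      rw [Finset.sum_congr rfl (fun j _ => show (if j = i then (0:ℝ) else 1)
        = 1 - (if j = i then 1 else 0) by split <;> ring)]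
      rw [Finset.sum_sub_distrib, Finset.sum_ite_eq' S i (fun _ => (1:ℝ)), if_pos hi]
      simp
    rw [Finset.sum_congr rfl hinner]
    simp [mul_comm]
    ring
  have hray := rayleigh_le' M (signMat_herm' n) x
  rw [hxMx, hxx] at hray
  have hc : (S.card : ℝ) = (n : ℝ) - 3 := by
    rw [hScard]
    push_cast [Nat.cast_sub (by omega : 3 ≤ n)]
    ring
  rw [hc] at hray
  have hn' : (9 : ℝ) ≤ (n : ℝ) := by exact_mod_cast hn
  have hpos : (0 : ℝ) < (n : ℝ) - 3 := by linarith
  unfold lam1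
  nlinarith [hray, hpos]
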